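/- Let (H, μ) be a commutative Hilbertian Frobenius semigroup. Then the Jacobson radical of (H, μ) equals its annihilator: J(H, μ) = { u ∈ H : μ(u ⊗ v) = 0 for all v ∈ H }. -/

import Mathlib

set_option maxHeartbeats 1000000
set_option synthInstance.maxHeartbeats 400000

open scoped ComplexInnerProductSpace

/-- `x` is group-like: `x ≠ 0` and `μ†(x) = x ⊗ x`, i.e.
`⟨μ(u ⊗ v), x⟩ = ⟨u, x⟩⟨v, x⟩` for all `u v`. -/
def IsGrouplike {H : Type*} [NormedAddCommGroup H] [InnerProductSpace ℂ H]
    (m : H →L[ℂ] H →L[ℂ] H) (x : H) : Prop :=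
  x ≠ 0 ∧ ∀ u v : H, ⟪x, m u v⟫ = ⟪x, u⟫ * ⟪x, v⟫

/-- In a commutative Hilbertian Frobenius semigroup (Frobenius via the
equivalent `H*`-adjoint formulation), the Jacobson radical — which coincides with the
orthogonal complement of the set of group-like elements — equals the annihilator
`{u : uv = 0 for all v}`. -/
theorem stmt_11 {H : Type*} [NormedAddCommGroup H] [InnerProductSpace ℂ H] [CompleteSpace H]
    (m : H →L[ℂ] H →L[ℂ] H)
    (hcomm : ∀ u v : H, m u v = m v u)
    (hassoc : ∀ u v w : H, m (m u v) w = m u (m v w))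
    (hfrob : ∀ u : H, ∃ us : H, ∀ v w : H, ⟪m u v, w⟫ = ⟪v, m us w⟫) :
    {u : H | ∀ x : H, IsGrouplike m x → ⟪x, u⟫ = 0} =
      {u : H | ∀ v : H, m u v = 0} := by
  ext u
  simp only [Set.mem_setOf_eq]
  constructor
  · -- hard direction : orthogonal to all grouplikes → annihilator
    intro hu
    -- the commutative closed subalgebra generated by all multiplication operators
    set S : Set (H →L[ℂ] H) := Set.range fun v => m v with hSdef
    have hScomm : ∀ a ∈ S, ∀ b ∈ S, a * b = b * a := by
      rintro _ ⟨v, rfl⟩ _ ⟨w, rfl⟩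
      ext z
      simp only [ContinuousLinearMap.mul_apply]
      rw [← hassoc, hcomm v w, hassoc]
    set C : Subalgebra ℂ (H →L[ℂ] H) := (Algebra.adjoin ℂ S).topologicalClosure with hCdef
    have hmem : ∀ v : H, (m v : H →L[ℂ] H) ∈ C := fun v =>
      (Algebra.adjoin ℂ S).le_topologicalClosure (Algebra.subset_adjoin ⟨v, rfl⟩)
    letI : CommRing ↥(Algebra.adjoin ℂ S) := Algebra.adjoinCommRingOfComm ℂ hScomm
    letI : CommRing ↥C := (Algebra.adjoin ℂ S).commRingTopologicalClosure fun x y => mul_comm x y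
    letI : NormedCommRing ↥C := { (inferInstance : NormedRing ↥C) with
      mul_comm := mul_comm }
    haveI : CompleteSpace ↥C :=
      (Subalgebra.isClosed_topologicalClosure _).completeSpace_coe
    -- the continuous linear map `v ↦ M_v` into `C`
    let Mc : H →L[ℂ] ↥C := LinearMap.mkContinuous
      { toFun := fun v => (⟨m v, hmem v⟩ : ↥C)
        map_add' := fun v w => Subtype.ext (by simp)
        map_smul' := fun c v => Subtype.ext (by simp) } ‖m‖
      (fun v => m.le_opNorm v)
    have hMc : ∀ v : H, ((Mc v : ↥C) : H →L[ℂ] H) = m v := fun v => rfl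
    have hMcmul : ∀ v w : H, Mc (m v w) = Mc v * Mc w := by
      intro v w
      apply Subtype.ext
      rw [Subalgebra.coe_mul, hMc, hMc, hMc]
      ext z
      simp only [ContinuousLinearMap.mul_apply]
      exact hassoc v w z
    -- every character of `C` kills `M_u`
    have hchar : ∀ χ : WeakDual.characterSpace ℂ ↥C, χ (Mc u) = 0 := by
      intro χ
      let f : H →L[ℂ] ℂ :=
        (WeakDual.toStrongDual (χ : WeakDual ℂ ↥C)).comp Mc
      have hf : ∀ v : H, f v = χ (Mc v) := fun v => rfl
      have hfmul : ∀ v w : H, f (m v w) = f v * f w := by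
        intro v w
        rw [hf, hf, hf, hMcmul, map_mul]
      set x : H := (InnerProductSpace.toDual ℂ H).symm f with hxdef
      have hxf : ∀ v : H, ⟪x, v⟫ = f v := fun v =>
        InnerProductSpace.toDual_symm_apply
      have hfu : f u = 0 := by
        by_cases hx0 : x = 0
        · rw [← hxf u, hx0, inner_zero_left]
        · rw [← hxf u]
          refine hu x ⟨hx0, fun v w => ?_⟩
          rw [hxf, hxf, hxf, hfmul]
      rw [← hf]; exact hfu
    -- hence the spectrum of `M_u` is contained in `{0}`
    have hsub : spectrum ℂ (m u : H →L[ℂ] H) ⊆ {0} := by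
      intro z hz
      have hz' : z ∈ spectrum ℂ (Mc u) := by
        refine spectrum.subset_subalgebra (Mc u) ?_
        rw [hMc u]; exact hz
      obtain ⟨χ, hχ'⟩ := WeakDual.CharacterSpace.mem_spectrum_iff_exists.mp hz'
      rw [hchar χ] at hχ'
      exact hχ'.symm
    -- `M_u` is a normal operator
    obtain ⟨us, hus⟩ := hfrob u
    have hadj : ContinuousLinearMap.adjoint (m u) = m us := by
      symm
      rw [ContinuousLinearMap.eq_adjoint_iff]
      intro x y
      rw [← inner_conj_symm (m us x) y, ← hus y x, inner_conj_symm]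
    haveI hnormal : IsStarNormal (m u : H →L[ℂ] H) := by
      constructor
      have : (m us) * (m u) = (m u) * (m us) := by
        ext w
        simp only [ContinuousLinearMap.mul_apply]
        rw [← hassoc, hcomm us u, hassoc]
      rw [Commute, SemiconjBy, ContinuousLinearMap.star_eq_adjoint, hadj]
      exact this
    -- conclude : spectral radius zero and normality give `M_u = 0`
    have hrad : spectralRadius ℂ (m u : H →L[ℂ] H) = 0 := by
      refine le_antisymm ?_ zero_le
      simp only [spectralRadius]
      refine iSup₂_le fun k hk => ?_
      obtain rfl : k = 0 := hsub hk
      simp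
    have h1 := IsStarNormal.spectralRadius_eq_nnnorm (m u : H →L[ℂ] H)
    rw [hrad] at h1
    have h2 : ‖(m u : H →L[ℂ] H)‖₊ = 0 := by exact_mod_cast h1.symm
    have h3 : (m u : H →L[ℂ] H) = 0 := by simpa using h2
    intro v
    rw [h3]
    simp
  · intro hu x hx
    have h := hx.2 u u
    rw [hu u, inner_zero_right] at h
    exact mul_self_eq_zero.mp h.symm
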